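/- The automorphism group of a countable first-order structure M with a stationary independence relation, equipped with the topology of pointwise convergence, has a dense conjugacy class. The same conclusion holds when M carries only a local stationary independence relation, provided that for all finite tuples ā and b̄ in M realising the same type there is an element c ∈ M with tp(ā/{c}) = tp(b̄/{c}). -/

import Mathlib

open FirstOrder Set

namespace TentZiegler

variable {L : FirstOrder.Language} {M : Type*} [L.Structure M]

/-- The automorphism group of a first-order structure, with `(f * g) x = f (g x)`. -/
instance autGroup : Group (M ≃[L] M) where
  mul f g := f.comp g
  one := FirstOrder.Language.Equiv.refl L M
  inv := FirstOrder.Language.Equiv.symm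
  mul_assoc _ _ _ := rfl
  one_mul _ := rfl
  mul_one _ := rfl
  inv_mul_cancel f := FirstOrder.Language.Equiv.ext fun x =>
    (f.symm_apply_apply x).trans (FirstOrder.Language.Equiv.refl_apply x).symm

@[simp] lemma aut_mul_apply (f g : M ≃[L] M) (x : M) : (f * g) x = f (g x) := rfl

@[simp] lemma aut_inv_apply (f : M ≃[L] M) (x : M) : f⁻¹ x = f.symm x := rfl

/-- Tuples `x` and `y` realise the same type over `B`: some automorphism fixing `B`
pointwise maps `x` to `y`. -/
def SameTypeOver (L : FirstOrder.Language) {M : Type*} [L.Structure M]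
    (B : Set M) {n : ℕ} (x y : Fin n → M) : Prop :=
  ∃ g : M ≃[L] M, (∀ b ∈ B, g b = b) ∧ ∀ i, g (x i) = y i

/-- `indep` is a stationary independence relation on `M` (between finite subsets). -/
structure IsSIR (L : FirstOrder.Language) (M : Type*) [L.Structure M]
    (indep : Set M → Set M → Set M → Prop) : Prop where
  invariance : ∀ (g : M ≃[L] M) {A B C : Set M}, A.Finite → B.Finite → C.Finite →
    indep A B C → indep (g '' A) (g '' B) (g '' C)
  monotonicity₁ : ∀ {A B C D : Set M}, A.Finite → B.Finite → C.Finite → D.Finite →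
    indep A B (C ∪ D) → indep A B C
  monotonicity₂ : ∀ {A B C D : Set M}, A.Finite → B.Finite → C.Finite → D.Finite →
    indep A B (C ∪ D) → indep A (B ∪ C) D
  transitivity : ∀ {A B C D : Set M}, A.Finite → B.Finite → C.Finite → D.Finite →
    indep A B C → indep A (B ∪ C) D → indep A B D
  symmetry : ∀ {A B C : Set M}, A.Finite → B.Finite → C.Finite →
    indep A B C → indep C B A
  existence : ∀ {n : ℕ} (a : Fin n → M) {B C : Set M}, B.Finite → C.Finite →
    ∃ a' : Fin n → M, SameTypeOver L B a a' ∧ indep (Set.range a') B C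
  stationarity : ∀ {n : ℕ} {a a' : Fin n → M} {B C : Set M}, B.Finite → C.Finite →
    SameTypeOver L B a a' → indep (Set.range a) B C → indep (Set.range a') B C →
    SameTypeOver L (B ∪ C) a a'

/-- `indep` is a local stationary independence relation on `M`: the axioms are only
required over nonempty base sets. -/
structure IsLocalSIR (L : FirstOrder.Language) (M : Type*) [L.Structure M]
    (indep : Set M → Set M → Set M → Prop) : Prop where
  invariance : ∀ (g : M ≃[L] M) {A B C : Set M}, A.Finite → B.Finite → C.Finite →
    B.Nonempty → indep A B C → indep (g '' A) (g '' B) (g '' C)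
  monotonicity₁ : ∀ {A B C D : Set M}, A.Finite → B.Finite → C.Finite → D.Finite →
    B.Nonempty → indep A B (C ∪ D) → indep A B C
  monotonicity₂ : ∀ {A B C D : Set M}, A.Finite → B.Finite → C.Finite → D.Finite →
    B.Nonempty → indep A B (C ∪ D) → indep A (B ∪ C) D
  transitivity : ∀ {A B C D : Set M}, A.Finite → B.Finite → C.Finite → D.Finite →
    B.Nonempty → indep A B C → indep A (B ∪ C) D → indep A B D
  symmetry : ∀ {A B C : Set M}, A.Finite → B.Finite → C.Finite →
    B.Nonempty → indep A B C → indep C B A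
  existence : ∀ {n : ℕ} (a : Fin n → M) {B C : Set M}, B.Finite → C.Finite →
    B.Nonempty → ∃ a' : Fin n → M, SameTypeOver L B a a' ∧ indep (Set.range a') B C
  stationarity : ∀ {n : ℕ} {a a' : Fin n → M} {B C : Set M}, B.Finite → C.Finite →
    B.Nonempty → SameTypeOver L B a a' → indep (Set.range a) B C →
    indep (Set.range a') B C → SameTypeOver L (B ∪ C) a a'

/-- The tuple `x` is independent from the tuple `y` over `A; B`. -/
def IndepOver {M : Type*} (indep : Set M → Set M → Set M → Prop) {n m : ℕ}
    (x : Fin n → M) (y : Fin m → M) (A B : Set M) : Prop :=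
  indep (Set.range x) A (B ∪ Set.range y) ∧ indep (Set.range x ∪ A) B (Set.range y)

/-- `g` moves maximally: for every finite set `X` and every type over `X`, some
realisation `x` of the type is independent from `g(x)` over `X; g(X)`. -/
def MovesMaximally (L : FirstOrder.Language) {M : Type*} [L.Structure M]
    (indep : Set M → Set M → Set M → Prop) (g : M ≃[L] M) : Prop :=
  ∀ (X : Set M), X.Finite → ∀ {n : ℕ} (a : Fin n → M),
    ∃ a' : Fin n → M, SameTypeOver L X a a' ∧
      IndepOver indep a' (fun i => g (a' i)) X (g '' X)

/-- `g` moves maximally (local version: only nonempty finite base sets `X`). -/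
def MovesMaximallyLoc (L : FirstOrder.Language) {M : Type*} [L.Structure M]
    (indep : Set M → Set M → Set M → Prop) (g : M ≃[L] M) : Prop :=
  ∀ (X : Set M), X.Finite → X.Nonempty → ∀ {n : ℕ} (a : Fin n → M),
    ∃ a' : Fin n → M, SameTypeOver L X a a' ∧
      IndepOver indep a' (fun i => g (a' i)) X (g '' X)

/-- The topology of pointwise convergence on the automorphism group (`M` discrete). -/
def autTopology (L : FirstOrder.Language) (M : Type*) [L.Structure M] :
    TopologicalSpace (M ≃[L] M) :=
  letI : TopologicalSpace M := ⊥
  TopologicalSpace.induced (fun (g : M ≃[L] M) (x : M) => g x) inferInstance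

/-- The topology of pointwise convergence, as an instance. -/
instance autTopologyInst : TopologicalSpace (M ≃[L] M) := autTopology L M

end TentZiegler

namespace TentZiegler

section Aux

open Topology

variable {L : FirstOrder.Language} {M : Type*} [L.Structure M]

lemma range_finAppend {m m' : ℕ} (u : Fin m → M) (v : Fin m' → M) :
    Set.range (Fin.append u v) = Set.range u ∪ Set.range v := by
  ext x
  constructor
  · rintro ⟨i, rfl⟩
    induction i using Fin.addCases with
    | left j => left; rw [Fin.append_left]; exact ⟨j, rfl⟩
    | right j => right; rw [Fin.append_right]; exact ⟨j, rfl⟩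
  · rintro (⟨j, rfl⟩ | ⟨j, rfl⟩)
    · exact ⟨Fin.castAdd m' j, Fin.append_left u v j⟩
    · exact ⟨Fin.natAdd m j, Fin.append_right u v j⟩

lemma equiv_image_range (e : M ≃[L] M) {p : ℕ} (x : Fin p → M) :
    e '' Set.range x = Set.range fun i => e (x i) :=
  (Set.range_comp e x).symm

lemma ap_of_sir {indep : Set M → Set M → Set M → Prop} (h : IsSIR L M indep)
    {n m : ℕ} (a b : Fin n → M) (hab : SameTypeOver L (∅ : Set M) a b)
    (u v : Fin m → M) (huv : SameTypeOver L (∅ : Set M) u v) :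
    ∃ k σ : M ≃[L] M, (∀ i, σ (a i) = b i) ∧ (∀ i, σ (k (u i)) = k (v i)) := by
  obtain ⟨g, -, hg⟩ := hab
  obtain ⟨t, -, ht⟩ := huv
  have fa := Set.finite_range a
  have fb := Set.finite_range b
  obtain ⟨w₀, ⟨k, -, hk⟩, hind⟩ := h.existence (Fin.append u v)
    (B := (∅ : Set M)) (C := Set.range a ∪ Set.range b) Set.finite_empty (fa.union fb)
  have fu := Set.finite_range fun i => k (u i)
  have fv := Set.finite_range fun i => k (v i)
  have hw₀ : w₀ = fun i => k (Fin.append u v i) := funext fun i => (hk i).symm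
  have hrange : Set.range w₀ =
      (Set.range fun i => k (u i)) ∪ Set.range fun i => k (v i) := by
    rw [hw₀, show (fun i => k (Fin.append u v i)) = k ∘ Fin.append u v from rfl,
      Set.range_comp, range_finAppend, Set.image_union, equiv_image_range,
      equiv_image_range]
  rw [hrange] at hind
  have h1 : indep (Set.range a ∪ Set.range b) ∅
      ((Set.range fun i => k (u i)) ∪ Set.range fun i => k (v i)) :=
    h.symmetry (fu.union fv) Set.finite_empty (fa.union fb) hind
  have hu1 : indep (Set.range fun i => k (u i)) ∅ (Set.range a) := by
    have h2 := h.monotonicity₁ (fa.union fb) Set.finite_empty fu fv h1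
    have h3 := h.symmetry (fa.union fb) Set.finite_empty fu h2
    exact h.monotonicity₁ fu Set.finite_empty fa fb h3
  have hv1 : indep (Set.range fun i => k (v i)) ∅ (Set.range b) := by
    rw [Set.union_comm (Set.range fun i => k (u i))] at h1
    have h2 := h.monotonicity₁ (fa.union fb) Set.finite_empty fv fu h1
    have h3 := h.symmetry (fa.union fb) Set.finite_empty fv h2
    rw [Set.union_comm] at h3
    exact h.monotonicity₁ fv Set.finite_empty fb fa h3
  have hv2 : indep (Set.range fun i => g⁻¹ (k (v i))) ∅ (Set.range a) := by
    have h2 := h.invariance g⁻¹ fv Set.finite_empty fb hv1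
    rw [equiv_image_range, equiv_image_range, Set.image_empty] at h2
    have hba : (fun i => (g⁻¹ : M ≃[L] M) (b i)) = a := funext fun i => by
      rw [← hg i]; exact g.symm_apply_apply (a i)
    rwa [hba] at h2
  have hst : SameTypeOver L (∅ : Set M) (fun i => k (u i)) fun i => g⁻¹ (k (v i)) :=
    ⟨g⁻¹ * k * t * k⁻¹, fun x hx => absurd hx (Set.notMem_empty x), fun i => by
      simp only [aut_mul_apply, aut_inv_apply, Language.Equiv.symm_apply_apply]
      rw [ht i]⟩
  obtain ⟨ρ, hρ1, hρ2⟩ := h.stationarity (B := (∅ : Set M)) (C := Set.range a)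
    Set.finite_empty fa hst hu1 hv2
  refine ⟨k, g * ρ, fun i => ?_, fun i => ?_⟩
  · have hρa : ρ (a i) = a i := hρ1 (a i) (Set.mem_union_right _ ⟨i, rfl⟩)
    simp only [aut_mul_apply, hρa, hg i]
  · have hρu := hρ2 i
    simp only [aut_mul_apply, hρu, aut_inv_apply, Language.Equiv.apply_symm_apply]

lemma ap_of_local {indep : Set M → Set M → Set M → Prop} (h : IsLocalSIR L M indep)
    (H : ∀ (n : ℕ) (a b : Fin n → M), SameTypeOver L (∅ : Set M) a b →
      ∃ c : M, SameTypeOver L ({c} : Set M) a b)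
    {n m : ℕ} (a b : Fin n → M) (hab : SameTypeOver L (∅ : Set M) a b)
    (u v : Fin m → M) (huv : SameTypeOver L (∅ : Set M) u v)
    (i₀ : Fin m) (hfix : u i₀ = v i₀) :
    ∃ k σ : M ≃[L] M, (∀ i, σ (a i) = b i) ∧ (∀ i, σ (k (u i)) = k (v i)) := by
  obtain ⟨t, -, ht⟩ := huv
  have htc : t (u i₀) = u i₀ := by rw [ht i₀, ← hfix]
  obtain ⟨d, g, hgd, hg⟩ := H n a b hab
  have hgd' : g d = d := hgd d rfl
  have hsd : g.symm d = d := by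
    have h2 := congrArg (fun x => g.symm x) hgd'
    simpa using h2.symm
  have fa := Set.finite_range a
  have fb := Set.finite_range b
  -- Step 1: find a copy c' of c := u i₀ such that some automorphism maps a to b
  -- and fixes c'.
  obtain ⟨c₁, ⟨k₁, hk₁d, hk₁⟩, hind₁⟩ := h.existence (fun _ : Fin 1 => u i₀)
    (B := ({d} : Set M)) (C := Set.range a ∪ Set.range b) (Set.finite_singleton d)
    (fa.union fb) ⟨d, rfl⟩
  set c' := c₁ default with hc'
  have hk₁c : k₁ (u i₀) = c' := hk₁ default
  rw [Set.range_unique] at hind₁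
  have hfc : ({c'} : Set M).Finite := Set.finite_singleton _
  have hfd : ({d} : Set M).Finite := Set.finite_singleton _
  have hc'a : indep ({c'} : Set M) {d} (Set.range a) :=
    h.monotonicity₁ hfc hfd fa fb ⟨d, rfl⟩ hind₁
  have hc'b : indep ({c'} : Set M) {d} (Set.range b) := by
    rw [Set.union_comm] at hind₁
    exact h.monotonicity₁ hfc hfd fb fa ⟨d, rfl⟩ hind₁
  have hc'2 : indep ({(g⁻¹ : M ≃[L] M) c'} : Set M) {d} (Set.range a) := by
    have h2 := h.invariance g⁻¹ hfc hfd fb ⟨d, rfl⟩ hc'b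
    rw [Set.image_singleton, Set.image_singleton, equiv_image_range] at h2
    have hba : (fun i => (g⁻¹ : M ≃[L] M) (b i)) = a := funext fun i => by
      rw [← hg i]; exact g.symm_apply_apply (a i)
    have hdd : (g⁻¹ : M ≃[L] M) d = d := hsd
    rwa [hba, hdd] at h2
  have hst₁ : SameTypeOver L ({d} : Set M) (fun _ : Fin 1 => c')
      fun _ : Fin 1 => (g⁻¹ : M ≃[L] M) c' :=
    ⟨g⁻¹, fun x hx => by rw [Set.mem_singleton_iff] at hx; rw [hx]; exact hsd,
      fun _ => rfl⟩
  obtain ⟨ρ₁, hρ₁1, hρ₁2⟩ := h.stationarity (B := ({d} : Set M)) (C := Set.range a)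
    hfd fa ⟨d, rfl⟩ hst₁ (by rwa [Set.range_unique]) (by rwa [Set.range_unique])
  have hρ₁c : ρ₁ c' = (g⁻¹ : M ≃[L] M) c' := hρ₁2 default
  have hρ₁a : ∀ i, ρ₁ (a i) = a i := fun i =>
    hρ₁1 (a i) (Set.mem_union_right _ ⟨i, rfl⟩)
  set g₁ : M ≃[L] M := g * ρ₁ with hg₁
  have hg₁a : ∀ i, g₁ (a i) = b i := fun i => by
    rw [hg₁]; simp only [aut_mul_apply, hρ₁a i, hg i]
  have hg₁c : g₁ c' = c' := by
    rw [hg₁]; simp only [aut_mul_apply, hρ₁c, aut_inv_apply,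
      Language.Equiv.apply_symm_apply]
  have hg₁sc : g₁.symm c' = c' := by
    have h2 := congrArg (fun x => g₁.symm x) hg₁c
    simpa using h2.symm
  -- Step 2: amalgamate over the base {c'}.
  set u₁ : Fin m → M := fun i => k₁ (u i) with hu₁
  set v₁ : Fin m → M := fun i => k₁ (v i) with hv₁
  set t₁ : M ≃[L] M := k₁ * t * k₁⁻¹ with ht₁def
  have ht₁ : ∀ i, t₁ (u₁ i) = v₁ i := fun i => by
    rw [ht₁def, hu₁, hv₁]
    simp only [aut_mul_apply, aut_inv_apply, Language.Equiv.symm_apply_apply]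
    rw [ht i]
  have ht₁c : t₁ c' = c' := by
    rw [ht₁def, ← hk₁c]
    simp only [aut_mul_apply, aut_inv_apply, Language.Equiv.symm_apply_apply]
    rw [htc]
  obtain ⟨w₀, ⟨k₂, hk₂c, hk₂⟩, hind₂⟩ := h.existence (Fin.append u₁ v₁)
    (B := ({c'} : Set M)) (C := Set.range a ∪ Set.range b) hfc (fa.union fb) ⟨c', rfl⟩
  have hk₂c' : k₂ c' = c' := hk₂c c' rfl
  have hk₂sc : k₂.symm c' = c' := by
    have h2 := congrArg (fun x => k₂.symm x) hk₂c'
    simpa using h2.symm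
  have fu := Set.finite_range fun i => k₂ (u₁ i)
  have fv := Set.finite_range fun i => k₂ (v₁ i)
  have hw₀ : w₀ = fun i => k₂ (Fin.append u₁ v₁ i) := funext fun i => (hk₂ i).symm
  have hrange : Set.range w₀ =
      (Set.range fun i => k₂ (u₁ i)) ∪ Set.range fun i => k₂ (v₁ i) := by
    rw [hw₀, show (fun i => k₂ (Fin.append u₁ v₁ i)) = k₂ ∘ Fin.append u₁ v₁ from rfl,
      Set.range_comp, range_finAppend, Set.image_union, equiv_image_range,
      equiv_image_range]
  rw [hrange] at hind₂
  have h1 : indep (Set.range a ∪ Set.range b) {c'}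
      ((Set.range fun i => k₂ (u₁ i)) ∪ Set.range fun i => k₂ (v₁ i)) :=
    h.symmetry (fu.union fv) hfc (fa.union fb) ⟨c', rfl⟩ hind₂
  have hu2 : indep (Set.range fun i => k₂ (u₁ i)) {c'} (Set.range a) := by
    have h2 := h.monotonicity₁ (fa.union fb) hfc fu fv ⟨c', rfl⟩ h1
    have h3 := h.symmetry (fa.union fb) hfc fu ⟨c', rfl⟩ h2
    exact h.monotonicity₁ fu hfc fa fb ⟨c', rfl⟩ h3
  have hv2 : indep (Set.range fun i => k₂ (v₁ i)) {c'} (Set.range b) := by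
    rw [Set.union_comm (Set.range fun i => k₂ (u₁ i))] at h1
    have h2 := h.monotonicity₁ (fa.union fb) hfc fv fu ⟨c', rfl⟩ h1
    have h3 := h.symmetry (fa.union fb) hfc fv ⟨c', rfl⟩ h2
    rw [Set.union_comm] at h3
    exact h.monotonicity₁ fv hfc fb fa ⟨c', rfl⟩ h3
  have hv3 : indep (Set.range fun i => (g₁⁻¹ : M ≃[L] M) (k₂ (v₁ i))) {c'}
      (Set.range a) := by
    have h2 := h.invariance g₁⁻¹ fv hfc fb ⟨c', rfl⟩ hv2
    rw [equiv_image_range, Set.image_singleton, equiv_image_range] at h2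
    have hba : (fun i => (g₁⁻¹ : M ≃[L] M) (b i)) = a := funext fun i => by
      rw [← hg₁a i]; exact g₁.symm_apply_apply (a i)
    have hcc : (g₁⁻¹ : M ≃[L] M) c' = c' := hg₁sc
    rwa [hba, hcc] at h2
  have hst₂ : SameTypeOver L ({c'} : Set M) (fun i => k₂ (u₁ i))
      fun i => (g₁⁻¹ : M ≃[L] M) (k₂ (v₁ i)) := by
    refine ⟨g₁⁻¹ * k₂ * t₁ * k₂⁻¹, fun x hx => ?_, fun i => ?_⟩
    · rw [Set.mem_singleton_iff] at hx
      rw [hx]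
      simp only [aut_mul_apply, aut_inv_apply]
      rw [hk₂sc, ht₁c, hk₂c']
      exact hg₁sc
    · simp only [aut_mul_apply, aut_inv_apply, Language.Equiv.symm_apply_apply]
      rw [ht₁ i]
  obtain ⟨ρ, hρ1, hρ2⟩ := h.stationarity (B := ({c'} : Set M)) (C := Set.range a)
    hfc fa ⟨c', rfl⟩ hst₂ hu2 hv3
  refine ⟨k₂ * k₁, g₁ * ρ, fun i => ?_, fun i => ?_⟩
  · have hρa : ρ (a i) = a i := hρ1 (a i) (Set.mem_union_right _ ⟨i, rfl⟩)
    simp only [aut_mul_apply, hρa, hg₁a i]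
  · have hρu := hρ2 i
    simp only [aut_mul_apply] at hρu ⊢
    rw [hρu]
    simp only [aut_inv_apply, Language.Equiv.apply_symm_apply]
    rfl

lemma engine {L : FirstOrder.Language} {M : Type*} [L.Structure M] [Countable M]
    [Nonempty M]
    (Good : ∀ m : ℕ, (Fin m → M) → (Fin m → M) → Prop)
    (AP : ∀ {n m : ℕ} (a b : Fin n → M), SameTypeOver L (∅ : Set M) a b →
      ∀ u v : Fin m → M, Good m u v →
      ∃ k σ : M ≃[L] M, (∀ i, σ (a i) = b i) ∧ (∀ i, σ (k (u i)) = k (v i)))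
    (cover : ∀ (f : M ≃[L] M) (p : ℕ) (x : Fin p → M),
      ∃ (m : ℕ) (u v : Fin m → M) (π : Fin p → Fin m),
        Good m u v ∧ (∀ i, u (π i) = x i) ∧ (∀ i, v (π i) = f (x i))) :
    ∃ g₀ : M ≃[L] M, Dense (Set.range fun h : M ≃[L] M => h⁻¹ * g₀ * h) := by
  classical
  obtain ⟨μ, hμ⟩ := exists_surjective_nat M
  haveI hne : Nonempty ((m : ℕ) × ((Fin m → M) × (Fin m → M))) :=
    ⟨⟨0, finZeroElim, finZeroElim⟩⟩
  obtain ⟨e, he⟩ := exists_surjective_nat ((m : ℕ) × ((Fin m → M) × (Fin m → M)))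
  have step : ∀ (F : Set M) (_ : F.Finite) (w : M ≃[L] M)
      (q : (m : ℕ) × ((Fin m → M) × (Fin m → M))),
      ∃ (F' : Set M) (w' : M ≃[L] M), F'.Finite ∧ F ⊆ F' ∧ (∀ x ∈ F, w' x = w x) ∧
        (Good q.1 q.2.1 q.2.2 →
          ∃ k : M ≃[L] M, (∀ i, k (q.2.1 i) ∈ F') ∧
            ∀ i, w' (k (q.2.1 i)) = k (q.2.2 i)) := by
    intro F hF w q
    by_cases hq : Good q.1 q.2.1 q.2.2
    · obtain ⟨p, aemb, ha⟩ := hF.fin_embedding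
      obtain ⟨k, σ, h1, h2⟩ := AP (fun i => aemb i) (fun i => w (aemb i))
        ⟨w, fun x hx => absurd hx (Set.notMem_empty x), fun _ => rfl⟩ q.2.1 q.2.2 hq
      refine ⟨F ∪ Set.range fun i => k (q.2.1 i), σ, hF.union (Set.finite_range _),
        Set.subset_union_left, ?_,
        fun _ => ⟨k, fun i => Set.mem_union_right _ ⟨i, rfl⟩, h2⟩⟩
      intro x hx
      rw [← ha] at hx
      obtain ⟨i, rfl⟩ := hx
      exact h1 i
    · exact ⟨F, w, hF, subset_rfl, fun _ _ => rfl, fun hq' => absurd hq' hq⟩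
  choose F' w' hfin hsub hagree hreal using step
  let nxt : ℕ → {p : Set M × (M ≃[L] M) // p.1.Finite} →
      {p : Set M × (M ≃[L] M) // p.1.Finite} := fun j p =>
    ⟨(F' p.1.1 p.2 p.1.2 (e j) ∪ {μ j, (w' p.1.1 p.2 p.1.2 (e j)).symm (μ j)},
      w' p.1.1 p.2 p.1.2 (e j)),
      (hfin _ _ _ _).union ((Set.finite_singleton _).insert _)⟩
  let seq : ℕ → {p : Set M × (M ≃[L] M) // p.1.Finite} :=
    fun j => Nat.rec ⟨(∅, 1), Set.finite_empty⟩ nxt j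
  let Fs : ℕ → Set M := fun j => (seq j).1.1
  let ws : ℕ → M ≃[L] M := fun j => (seq j).1.2
  have hws_succ : ∀ j, ws (j + 1) = w' (Fs j) (seq j).2 (ws j) (e j) := fun _ => rfl
  have hFs_succ : ∀ j, Fs (j + 1) =
      F' (Fs j) (seq j).2 (ws j) (e j) ∪ {μ j, (ws (j + 1)).symm (μ j)} := fun _ => rfl
  have hmono1 : ∀ j, Fs j ⊆ Fs (j + 1) := fun j => by
    rw [hFs_succ]
    exact (hsub _ _ _ _).trans Set.subset_union_left
  have hagree1 : ∀ j, ∀ x ∈ Fs j, ws (j + 1) x = ws j x := fun j x hx => by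
    rw [hws_succ]
    exact hagree _ _ _ _ x hx
  have hmono : ∀ {p q : ℕ}, p ≤ q → Fs p ⊆ Fs q := by
    intro p q hpq
    induction hpq with
    | refl => exact subset_rfl
    | step _ ih => exact ih.trans (hmono1 _)
  have hagree2 : ∀ {p q : ℕ}, p ≤ q → ∀ x ∈ Fs p, ws q x = ws p x := by
    intro p q hpq
    induction hpq with
    | refl => exact fun x _ => rfl
    | @step r hpr ih =>
        intro x hx
        rw [hagree1 r x (hmono hpr hx)]
        exact ih x hx
  have hstage : ∀ x : M, ∃ j, x ∈ Fs j := by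
    intro x
    obtain ⟨j, rfl⟩ := hμ x
    refine ⟨j + 1, ?_⟩
    rw [hFs_succ]
    exact Set.mem_union_right _ (Set.mem_insert _ _)
  choose st hst using hstage
  let φ : M → M := fun x => ws (st x) x
  have hφ : ∀ (j : ℕ) (x : M), x ∈ Fs j → φ x = ws j x := by
    intro j x hx
    rcases le_total (st x) j with hle | hle
    · exact (hagree2 hle x (hst x)).symm
    · exact hagree2 hle x hx
  have hfinstage : ∀ (p : ℕ) (x : Fin p → M), ∃ j, ∀ i, x i ∈ Fs j := by
    intro p x
    refine ⟨(Finset.univ : Finset (Fin p)).sup fun i => st (x i), fun i => ?_⟩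
    exact hmono (Finset.le_sup (Finset.mem_univ i)) (hst (x i))
  have hinj : Function.Injective φ := by
    intro x y hxy
    obtain ⟨j, hj⟩ := hfinstage 2 ![x, y]
    have hx : φ x = ws j x := hφ j x (hj 0)
    have hy : φ y = ws j y := hφ j y (hj 1)
    exact (ws j).injective (by rw [← hx, ← hy, hxy])
  have hsurj : Function.Surjective φ := by
    intro y
    obtain ⟨j, rfl⟩ := hμ y
    refine ⟨(ws (j + 1)).symm (μ j), ?_⟩
    have hmem : (ws (j + 1)).symm (μ j) ∈ Fs (j + 1) := by
      rw [hFs_succ]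
      exact Set.mem_union_right _ (Set.mem_insert_of_mem _ rfl)
    rw [hφ (j + 1) _ hmem, Language.Equiv.apply_symm_apply]
  let g₀ : M ≃[L] M :=
    { toEquiv := Equiv.ofBijective φ ⟨hinj, hsurj⟩
      map_fun' := by
        intro l f x
        obtain ⟨j, hj⟩ := hfinstage (l + 1) (Fin.cons (Language.Structure.funMap f x) x)
        have h0 : Language.Structure.funMap f x ∈ Fs j := by
          have h2 := hj 0
          rwa [Fin.cons_zero] at h2
        have hi : ∀ i : Fin l, x i ∈ Fs j := fun i => by
          have h2 := hj i.succ
          rwa [Fin.cons_succ] at h2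
        show φ (Language.Structure.funMap f x) = Language.Structure.funMap f (φ ∘ x)
        rw [hφ j _ h0, Language.Equiv.map_fun]
        congr 1
        funext i
        exact (hφ j (x i) (hi i)).symm
      map_rel' := by
        intro l r x
        obtain ⟨j, hj⟩ := hfinstage l x
        show Language.Structure.RelMap r (φ ∘ x) ↔ Language.Structure.RelMap r x
        have hcomp : φ ∘ x = (ws j : M → M) ∘ x := funext fun i => hφ j (x i) (hj i)
        rw [hcomp, Language.Equiv.map_rel] }
  have hg₀ : ∀ z, g₀ z = φ z := fun _ => rfl
  refine ⟨g₀, fun f => ?_⟩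
  rw [mem_closure_iff_nhds]
  intro s hs
  letI : TopologicalSpace M := ⊥
  haveI : DiscreteTopology M := ⟨rfl⟩
  have key : (𝓝 f : Filter (M ≃[L] M)) =
      Filter.comap (fun (g : M ≃[L] M) (x : M) => g x) (𝓝 fun x => f x) :=
    nhds_induced _ _
  rw [key] at hs
  obtain ⟨s', hs', hsub'⟩ := Filter.mem_comap.1 hs
  rw [nhds_pi] at hs'
  simp only [nhds_discrete] at hs'
  obtain ⟨I, hIfin, ts, hts, hpi⟩ := Filter.mem_pi.1 hs'
  obtain ⟨p, xt, hxt⟩ := hIfin.fin_embedding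
  obtain ⟨m, u, v, π, hgood, hu, hv⟩ := cover f p fun i => xt i
  obtain ⟨j, hej⟩ := he ⟨m, (u, v)⟩
  have hreal' := hreal (Fs j) (seq j).2 (ws j) (e j)
  rw [hej] at hreal'
  obtain ⟨k, hkmem, hkval⟩ := hreal' hgood
  have hws' : ws (j + 1) = w' (Fs j) (seq j).2 (ws j) ⟨m, (u, v)⟩ := by
    rw [hws_succ, hej]
  have hFs' : F' (Fs j) (seq j).2 (ws j) ⟨m, (u, v)⟩ ⊆ Fs (j + 1) := by
    rw [hFs_succ, hej]
    exact Set.subset_union_left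
  have hφk : ∀ i, φ (k (u i)) = k (v i) := by
    intro i
    have h2 := hkval i
    rw [← hws'] at h2
    rw [hφ (j + 1) _ (hFs' (hkmem i))]
    exact h2
  refine ⟨k⁻¹ * g₀ * k, hsub' ?_, ⟨k, rfl⟩⟩
  show (fun x => (k⁻¹ * g₀ * k) x) ∈ s'
  refine hpi fun y hy => ?_
  rw [← hxt] at hy
  obtain ⟨i, rfl⟩ := hy
  have hval : (k⁻¹ * g₀ * k) (xt i) = f (xt i) := by
    simp only [aut_mul_apply]
    rw [show k (xt i) = k (u (π i)) from by rw [hu i], hg₀, hφk (π i)]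
    simp only [aut_inv_apply, Language.Equiv.symm_apply_apply]
    exact hv i
  rw [hval]
  exact Filter.mem_pure.1 (hts (xt i))

end Aux

/-- Lemma 1.5: the automorphism group of a countable structure with a stationary
independence relation has a dense conjugacy class; the same holds for a local
stationary independence relation provided any two tuples of the same type have the
same type over some element `c`. -/
theorem dense_conjugacy_class {L : FirstOrder.Language} {M : Type*} [L.Structure M]
    [Countable M] (indep : Set M → Set M → Set M → Prop) :
    (IsSIR L M indep →
      ∃ g₀ : M ≃[L] M, Dense (Set.range fun h : M ≃[L] M => h⁻¹ * g₀ * h)) ∧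
    (IsLocalSIR L M indep →
      (∀ (n : ℕ) (a b : Fin n → M), SameTypeOver L (∅ : Set M) a b →
        ∃ c : M, SameTypeOver L ({c} : Set M) a b) →
      ∃ g₀ : M ≃[L] M, Dense (Set.range fun h : M ≃[L] M => h⁻¹ * g₀ * h)) := by
  constructor
  · intro hs
    rcases isEmpty_or_nonempty M with hM | hM
    · refine ⟨1, fun x => subset_closure ⟨1, ?_⟩⟩
      exact Language.Equiv.ext fun z => (hM.elim z)
    · exact engine (fun m u v => SameTypeOver L (∅ : Set M) u v)
        (fun a b hab u v huv => ap_of_sir hs a b hab u v huv)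
        (fun f p x => ⟨p, x, fun i => f (x i), id,
          ⟨f, fun z hz => absurd hz (Set.notMem_empty z), fun _ => rfl⟩,
          fun _ => rfl, fun _ => rfl⟩)
  · intro hl H
    rcases isEmpty_or_nonempty M with hM | hM
    · refine ⟨1, fun x => subset_closure ⟨1, ?_⟩⟩
      exact Language.Equiv.ext fun z => (hM.elim z)
    · refine engine
        (fun m u v => SameTypeOver L (∅ : Set M) u v ∧ ∃ i₀, u i₀ = v i₀)
        (fun a b hab u v huv => ?_) (fun f p x => ?_)
      · obtain ⟨i₀, hfix⟩ := huv.2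
        exact ap_of_local hl H a b hab u v huv.1 i₀ hfix
      · obtain ⟨c, s, hsc, hs'⟩ := H p x (fun i => f (x i))
          ⟨f, fun z hz => absurd hz (Set.notMem_empty z), fun _ => rfl⟩
        refine ⟨p + 1, Fin.cons c x, Fin.cons c fun i => f (x i), Fin.succ,
          ⟨⟨s, fun z hz => absurd hz (Set.notMem_empty z), fun i => ?_⟩,
            ⟨0, by simp⟩⟩, fun i => by simp, fun i => by simp⟩
        refine Fin.cases ?_ (fun i' => ?_) i
        · simpa using hsc c rfl
        · simpa using hs' i'

end TentZiegler
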